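/- Let α > 0 and β be real numbers, let λ be a real number, and let n be a natural number. Then for every z > 0, the n-th derivative of the function z ↦ z^{β−1} E_{α,β}(λ z^α) equals z^{β−n−1} E_{α,β−n}(λ z^α). -/

import Mathlib

open Filter Real Asymptotics

/-- Two-parameter Mittag-Leffler function `E_{α,β}(x) = ∑ₖ xᵏ / Γ(kα + β)`,
with the convention `1/Γ = 0` at the poles of `Γ` (in Mathlib, `Real.Gamma`
vanishes at nonpositive integers, so division by it gives `0` there). -/
noncomputable def mittagLeffler (a b x : ℝ) : ℝ := ∑' k : ℕ, x ^ k / Real.Gamma (k * a + b)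

lemma gamma_growth {α t : ℝ} (hα : 0 < α) (ht : 2 ≤ t) :
    (t - 1) ^ α * Real.Gamma t ≤ Real.Gamma (t + α) := by
  have h0 : (0:ℝ) < t - 1 := by linarith
  have ht0 : (0:ℝ) < t := by linarith
  have hslope := Real.convexOn_log_Gamma.slope_mono_adjacent
    (x := t - 1) (y := t) (z := t + α) (Set.mem_Ioi.2 h0) (Set.mem_Ioi.2 (by linarith))
    (by linarith) (by linarith)
  have hGam : Real.Gamma t = (t - 1) * Real.Gamma (t - 1) := by
    have := Real.Gamma_add_one (s := t - 1) h0.ne'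
    simpa using this
  have hg1 : (0:ℝ) < Real.Gamma (t - 1) := Real.Gamma_pos_of_pos h0
  have hgt : (0:ℝ) < Real.Gamma t := Real.Gamma_pos_of_pos ht0
  have hgta : (0:ℝ) < Real.Gamma (t + α) := Real.Gamma_pos_of_pos (by linarith)
  simp only [Function.comp_apply] at hslope
  rw [hGam, Real.log_mul h0.ne' hg1.ne'] at hslope
  have h1 : Real.log (t - 1) ≤ (Real.log (Real.Gamma (t + α)) - Real.log (Real.Gamma t)) / α := by
    have : t - (t - 1) = 1 := by ring
    rw [this, div_one] at hslope
    have : t + α - t = α := by ring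
    rw [this] at hslope
    calc Real.log (t - 1)
        = Real.log (t - 1) + Real.log (Real.Gamma (t - 1)) - Real.log (Real.Gamma (t - 1)) := by ring
      _ ≤ _ := by rw [hGam, Real.log_mul h0.ne' hg1.ne']; linarith
  have h2 : α * Real.log (t - 1) + Real.log (Real.Gamma t) ≤ Real.log (Real.Gamma (t + α)) := by
    rw [le_div_iff₀ hα] at h1; linarith [h1]
  calc (t - 1) ^ α * Real.Gamma t
      = Real.exp (α * Real.log (t - 1) + Real.log (Real.Gamma t)) := by
        rw [Real.exp_add, Real.exp_log hgt, Real.rpow_def_of_pos h0, mul_comm α]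
    _ ≤ Real.exp (Real.log (Real.Gamma (t + α))) := Real.exp_le_exp.2 h2
    _ = Real.Gamma (t + α) := Real.exp_log hgta

lemma summable_abs_ML {α : ℝ} (hα : 0 < α) (b : ℝ) {w : ℝ} (hw : 0 ≤ w) :
    Summable (fun k : ℕ => w ^ k / |Real.Gamma (k * α + b)|) := by
  apply summable_of_ratio_norm_eventually_le (r := 1/2) (by norm_num)
  have htend : Tendsto (fun k : ℕ => (k : ℝ) * α + b) atTop atTop :=
    tendsto_atTop_add_const_right _ b (tendsto_natCast_atTop_atTop.atTop_mul_const hα)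
  filter_upwards [htend.eventually_ge_atTop (max 2 (1 + (2 * w + 1) ^ α⁻¹))] with k hk
  set t := (k : ℝ) * α + b with htdef
  have ht2 : 2 ≤ t := le_trans (le_max_left _ _) hk
  have htw : 1 + (2 * w + 1) ^ α⁻¹ ≤ t := le_trans (le_max_right _ _) hk
  have ht0 : (0:ℝ) < t := by linarith
  have hgt : (0:ℝ) < Real.Gamma t := Real.Gamma_pos_of_pos ht0
  have hgta : (0:ℝ) < Real.Gamma (t + α) := Real.Gamma_pos_of_pos (by linarith)
  have hpow : (2 * w + 1 : ℝ) ≤ (t - 1) ^ α := by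
    calc (2 * w + 1 : ℝ) = ((2 * w + 1) ^ α⁻¹) ^ α :=
          (Real.rpow_inv_rpow (by linarith) hα.ne').symm
      _ ≤ (t - 1) ^ α := by
          apply Real.rpow_le_rpow (by positivity) (by linarith) hα.le
  have hkey : (2 * w + 1) * Real.Gamma t ≤ Real.Gamma (t + α) :=
    le_trans (by nlinarith) (gamma_growth hα ht2)
  have harg : ((k+1 : ℕ) : ℝ) * α + b = t + α := by push_cast; ring
  rw [harg]
  have h1 : (0:ℝ) ≤ w ^ k / |Real.Gamma t| := by positivity
  have h2 : (0:ℝ) ≤ w ^ (k+1) / |Real.Gamma (t + α)| := by positivity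
  rw [Real.norm_eq_abs, Real.norm_eq_abs, abs_of_nonneg h1, abs_of_nonneg h2,
    abs_of_pos hgt, abs_of_pos hgta]
  rw [mul_div_assoc'] 
  rw [div_le_div_iff₀ hgta hgt]
  nlinarith [mul_le_mul_of_nonneg_left hkey (by positivity : (0:ℝ) ≤ 1/2 * w ^ k),
    pow_nonneg hw k, hgt.le, pow_succ w k]

lemma gamma_shift (c : ℝ) : (c - 1) / Real.Gamma c = 1 / Real.Gamma (c - 1) := by
  by_cases h : ∃ m : ℕ, c - 1 = -(m : ℝ)
  · obtain ⟨m, hm⟩ := h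
    rw [hm, Real.Gamma_neg_nat_eq_zero, div_zero]
    rcases Nat.eq_zero_or_pos m with h0 | h0
    · subst h0; simp at hm; simp [hm]
    · have : c = -((m - 1 : ℕ) : ℝ) := by push_cast [h0]; linarith
      rw [this, Real.Gamma_neg_nat_eq_zero, div_zero]
  · push_neg at h
    have h1 : c - 1 ≠ 0 := by
      intro h0; exact h 0 (by simpa using h0)
    have h2 : Real.Gamma (c - 1) ≠ 0 := Real.Gamma_ne_zero h
    have h3 : Real.Gamma c = (c - 1) * Real.Gamma (c - 1) := by
      have := Real.Gamma_add_one (s := c - 1) h1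
      simpa using this
    rw [h3]
    field_simp

lemma ML_rep (α β lam : ℝ) {x : ℝ} (hx : 0 < x) :
    x ^ (β - 1) * mittagLeffler α β (lam * x ^ α)
      = ∑' k : ℕ, lam ^ k / Real.Gamma (k * α + β) * x ^ ((k : ℝ) * α + β - 1) := by
  rw [mittagLeffler, ← tsum_mul_left]
  congr 1; funext k
  rw [mul_pow, ← Real.rpow_natCast (x ^ α) k, ← Real.rpow_mul hx.le]
  have : x ^ (β - 1) * (lam ^ k * x ^ (α * (k : ℝ)) / Real.Gamma ((k : ℝ) * α + β))
      = lam ^ k / Real.Gamma ((k : ℝ) * α + β) * (x ^ (β - 1) * x ^ (α * (k : ℝ))) := by ring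
  rw [this, ← Real.rpow_add hx]
  congr 2
  ring

lemma ML_hasDerivAt {α : ℝ} (hα : 0 < α) (lam b : ℝ) {x : ℝ} (hx : 0 < x) :
    HasDerivAt (fun y : ℝ => y ^ (b - 1) * mittagLeffler α b (lam * y ^ α))
      (x ^ (b - 1 - 1) * mittagLeffler α (b - 1) (lam * x ^ α)) x := by
  set g : ℕ → ℝ → ℝ := fun k y => lam ^ k / Real.Gamma (k * α + b) * y ^ ((k : ℝ) * α + b - 1)
    with hg_def
  set g' : ℕ → ℝ → ℝ :=
    fun k y => lam ^ k / Real.Gamma (k * α + (b-1)) * y ^ ((k : ℝ) * α + (b-1) - 1) with hg'_def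
  set M : ℝ := max ((x/2) ^ (b-2)) ((x+1) ^ (b-2)) with hM_def
  set u : ℕ → ℝ := fun k => M * ((|lam| * (x+1) ^ α) ^ k / |Real.Gamma (k * α + (b-1))|)
    with hu_def
  have hu : Summable u :=
    (summable_abs_ML hα (b-1) (by positivity : (0:ℝ) ≤ |lam| * (x+1) ^ α)).mul_left M
  have hopen : IsOpen (Set.Ioo (x/2) (x+1)) := isOpen_Ioo
  have hconn : IsPreconnected (Set.Ioo (x/2) (x+1)) :=
    (convex_Ioo _ _).isPreconnected
  have hxmem : x ∈ Set.Ioo (x/2) (x+1) := ⟨by linarith, by linarith⟩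
  -- derivatives of each term
  have hderiv : ∀ k : ℕ, ∀ y ∈ Set.Ioo (x/2) (x+1), HasDerivAt (g k) (g' k y) y := by
    intro k y hy
    have hy0 : (0:ℝ) < y := lt_trans (by linarith) hy.1
    have h := (Real.hasDerivAt_rpow_const (x := y) (p := (k : ℝ) * α + b - 1)
      (Or.inl hy0.ne')).const_mul (lam ^ k / Real.Gamma (k * α + b))
    convert h using 1
    case e'_4 => rfl
    case e'_5 => rfl
    have e1 : (k : ℝ) * α + b - 1 - 1 = (k : ℝ) * α + (b-1) - 1 := by ring
    have e2 : (k : ℝ) * α + (b-1) = ((k : ℝ) * α + b) - 1 := by ring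
    rw [hg'_def]
    simp only []
    rw [e2, div_eq_mul_one_div, ← gamma_shift ((k : ℝ) * α + b)]
    ring
  -- bound
  have hbound : ∀ k : ℕ, ∀ y ∈ Set.Ioo (x/2) (x+1), ‖g' k y‖ ≤ u k := by
    intro k y hy
    have hy0 : (0:ℝ) < y := lt_trans (by linarith) hy.1
    have hsplit : y ^ ((k : ℝ) * α + (b-1) - 1) = y ^ ((k : ℝ) * α) * y ^ (b-2) := by
      rw [← Real.rpow_add hy0]; congr 1; ring
    have h1 : y ^ ((k : ℝ) * α) ≤ ((x+1) ^ α) ^ k := by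
      rw [mul_comm, Real.rpow_mul hy0.le, ← Real.rpow_natCast ((x+1) ^ α) k]
      apply Real.rpow_le_rpow (by positivity)
        (Real.rpow_le_rpow hy0.le (le_of_lt hy.2) hα.le) (by positivity)
    have h2 : y ^ (b-2) ≤ M := by
      rcases le_or_gt 0 (b-2) with hb | hb
      · exact le_trans (Real.rpow_le_rpow hy0.le (le_of_lt hy.2) hb) (le_max_right _ _)
      · exact le_trans (Real.rpow_le_rpow_of_nonpos (by linarith) (le_of_lt hy.1) hb.le)
          (le_max_left _ _)
    have hnorm : ‖g' k y‖
        = |lam| ^ k / |Real.Gamma (k * α + (b-1))| * (y ^ ((k:ℝ) * α) * y ^ (b-2)) := by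
      rw [hg'_def]
      simp only []
      rw [Real.norm_eq_abs, abs_mul, abs_div, abs_pow,
        abs_of_pos (Real.rpow_pos_of_pos hy0 _), hsplit]
    rw [hnorm, hu_def]
    simp only []
    rw [mul_pow]
    have hGnn : (0:ℝ) ≤ |Real.Gamma ((k:ℝ) * α + (b-1))|⁻¹ := by positivity
    have key : |lam| ^ k * (y ^ ((k:ℝ)*α) * y ^ (b-2))
        ≤ M * (|lam| ^ k * ((x+1) ^ α) ^ k) := by
      have hy2 : (0:ℝ) ≤ y ^ (b-2) := (Real.rpow_pos_of_pos hy0 _).le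
      have hyk : (0:ℝ) ≤ y ^ ((k:ℝ)*α) := (Real.rpow_pos_of_pos hy0 _).le
      have hMnn : (0:ℝ) ≤ M := le_trans hy2 h2
      have := mul_le_mul (mul_le_mul (le_refl (|lam| ^ k)) h1 hyk (by positivity)) h2
        hy2 (by positivity)
      calc |lam| ^ k * (y ^ ((k:ℝ)*α) * y ^ (b-2))
          = |lam| ^ k * y ^ ((k:ℝ)*α) * y ^ (b-2) := by ring
        _ ≤ |lam| ^ k * ((x+1) ^ α) ^ k * M := this
        _ = M * (|lam| ^ k * ((x+1) ^ α) ^ k) := by ring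
    calc |lam| ^ k / |Real.Gamma ((k:ℝ) * α + (b-1))| * (y ^ ((k:ℝ)*α) * y ^ (b-2))
        = |lam| ^ k * (y ^ ((k:ℝ)*α) * y ^ (b-2)) * |Real.Gamma ((k:ℝ) * α + (b-1))|⁻¹ := by
          ring
      _ ≤ M * (|lam| ^ k * ((x+1) ^ α) ^ k) * |Real.Gamma ((k:ℝ) * α + (b-1))|⁻¹ :=
          mul_le_mul_of_nonneg_right key hGnn
      _ = M * (|lam| ^ k * ((x+1) ^ α) ^ k / |Real.Gamma ((k:ℝ) * α + (b-1))|) := by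
          rw [mul_assoc, div_eq_mul_inv]
  -- summability at the point x
  have hg0 : Summable fun k => g k x := by
    apply Summable.of_norm_bounded
      (g := fun k : ℕ => x ^ (b-1) * ((|lam| * x ^ α) ^ k / |Real.Gamma (k * α + b)|))
      (((summable_abs_ML hα b (by positivity : (0:ℝ) ≤ |lam| * x ^ α))).mul_left _)
    intro k
    have hsplit : x ^ ((k : ℝ) * α + b - 1) = x ^ ((k : ℝ) * α) * x ^ (b-1) := by
      rw [← Real.rpow_add hx]; congr 1; ring
    have hxk : x ^ ((k:ℝ) * α) = (x ^ α) ^ k := by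
      rw [mul_comm, Real.rpow_mul hx.le, Real.rpow_natCast]
    rw [hg_def]
    simp only []
    rw [Real.norm_eq_abs, abs_mul, abs_div, abs_pow,
      abs_of_pos (Real.rpow_pos_of_pos hx _), hsplit, hxk, mul_pow]
    apply le_of_eq
    ring
  -- combine
  have hmain : HasDerivAt (fun y => ∑' k, g k y) (∑' k, g' k x) x :=
    hasDerivAt_tsum_of_isPreconnected hu hopen hconn hderiv hbound hxmem hg0 hxmem
  have heq : (fun y : ℝ => y ^ (b - 1) * mittagLeffler α b (lam * y ^ α))
      =ᶠ[nhds x] (fun y => ∑' k, g k y) := by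
    filter_upwards [hopen.mem_nhds hxmem] with y hy
    exact ML_rep α b lam (lt_trans (by linarith) hy.1)
  have hval : (∑' k, g' k x) = x ^ (b - 1 - 1) * mittagLeffler α (b - 1) (lam * x ^ α) := by
    rw [ML_rep α (b-1) lam hx]
  rw [hval] at hmain
  exact hmain.congr_of_eventuallyEq heq

theorem mittagLeffler_iteratedDeriv
    (α β lam : ℝ) (n : ℕ) (hα : 0 < α) :
    ∀ z > (0 : ℝ),
      iteratedDeriv n (fun z : ℝ => z ^ (β - 1) * mittagLeffler α β (lam * z ^ α)) z
        = z ^ (β - (n : ℝ) - 1) * mittagLeffler α (β - (n : ℝ)) (lam * z ^ α) := by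
  induction n with
  | zero =>
    intro z hz
    simp
  | succ n ih =>
    intro z hz
    rw [iteratedDeriv_succ]
    have heq : iteratedDeriv n (fun z : ℝ => z ^ (β - 1) * mittagLeffler α β (lam * z ^ α))
        =ᶠ[nhds z] fun y => y ^ (β - (n:ℝ) - 1) * mittagLeffler α (β - (n:ℝ)) (lam * y ^ α) := by
      filter_upwards [isOpen_Ioi.mem_nhds hz] with y hy
      exact ih y hy
    rw [heq.deriv_eq]
    have h := ML_hasDerivAt hα lam (β - (n:ℝ)) hz
    rw [h.deriv]
    have e1 : β - (n:ℝ) - 1 - 1 = β - ((n+1 : ℕ):ℝ) - 1 := by push_cast; ring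
    have e2 : β - (n:ℝ) - 1 = β - ((n+1 : ℕ):ℝ) := by push_cast; ring
    rw [e1, e2]
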